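/- Let q be a real number with q ≠ 0 and q ≠ 1, let l ≥ 1, let λ_1, λ_2, λ_3, λ_4 be real numbers, and let f_1, f_2, f_3, f_4 : ℝ → ℝ satisfy (∂_q f_j)(x) = λ_j · f_j(x) for all x ≠ 0. Set φ_1 = f_1 + f_4 and φ_2 = f_2 + f_3. Then for every x ≠ 0: W_4^q(φ_1, φ_2, ∂_q^l φ_1, ∂_q^l φ_2)(x) = (λ_4^l − λ_1^l)(λ_2^l − λ_3^l) · (∏_{1 ≤ i < j ≤ 4} (λ_j − λ_i)) · f_1(x) f_2(x) f_3(x) f_4(x). -/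

import Mathlib

/-- The `q`-derivative: `(∂_q f)(x) = (f(qx) − f(x))/(x(q−1))` (zero at `x = 0`). -/
noncomputable def qDeriv (q : ℝ) (f : ℝ → ℝ) : ℝ → ℝ :=
  fun x => (f (q * x) - f x) / (x * (q - 1))

/-- The q-Wronskian `W_n^q(f_1,…,f_n)(x) = det((∂_q^{i−1} f_j)(x))`. -/
noncomputable def qWronskian (q : ℝ) (n : ℕ) (f : Fin n → ℝ → ℝ) (x : ℝ) : ℝ :=
  Matrix.det (Matrix.of fun i j : Fin n => (qDeriv q)^[(i : ℕ)] (f j) x)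

lemma qDeriv_iter_sum (q : ℝ) (hq0 : q ≠ 0) (hq1 : q ≠ 1) (la lb : ℝ) (fa fb : ℝ → ℝ)
    (ha : ∀ x : ℝ, x ≠ 0 → qDeriv q fa x = la * fa x)
    (hb : ∀ x : ℝ, x ≠ 0 → qDeriv q fb x = lb * fb x) :
    ∀ k : ℕ, ∀ x : ℝ, x ≠ 0 →
      (qDeriv q)^[k] (fun y => fa y + fb y) x = la ^ k * fa x + lb ^ k * fb x := by
  intro k
  induction k with
  | zero => intro x hx; simp
  | succ n ih =>
    intro x hx
    have hqx : q * x ≠ 0 := mul_ne_zero hq0 hx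
    have hden : x * (q - 1) ≠ 0 := mul_ne_zero hx (sub_ne_zero.mpr hq1)
    rw [Function.iterate_succ_apply']
    have expand : qDeriv q ((qDeriv q)^[n] fun y => fa y + fb y) x
        = ((qDeriv q)^[n] (fun y => fa y + fb y) (q * x)
          - (qDeriv q)^[n] (fun y => fa y + fb y) x) / (x * (q - 1)) := rfl
    rw [expand, ih (q * x) hqx, ih x hx]
    have ha' := ha x hx
    have hb' := hb x hx
    have ha'' : fa (q * x) - fa x = la * fa x * (x * (q - 1)) := by
      rw [← ha']; unfold qDeriv; rw [div_mul_cancel₀ _ hden]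
    have hb'' : fb (q * x) - fb x = lb * fb x * (x * (q - 1)) := by
      rw [← hb']; unfold qDeriv; rw [div_mul_cancel₀ _ hden]
    have hfa : fa (q * x) = fa x + la * fa x * (x * (q - 1)) := by linarith
    have hfb : fb (q * x) = fb x + lb * fb x * (x * (q - 1)) := by linarith
    rw [hfa, hfb]
    field_simp
    ring

/-- For q-eigenfunctions `∂_q f_j = λ_j f_j` and `φ_1 = f_1 + f_4`, `φ_2 = f_2 + f_3`:
`W_4^q(φ_1,φ_2,∂_q^l φ_1,∂_q^l φ_2)(x)
 = (λ_4^l − λ_1^l)(λ_2^l − λ_3^l)·∏_{1≤i<j≤4}(λ_j − λ_i)·f_1(x)f_2(x)f_3(x)f_4(x)`. -/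
theorem qWronskian_constraint_example (q : ℝ) (hq0 : q ≠ 0) (hq1 : q ≠ 1)
    (l : ℕ) (hl : 1 ≤ l) (l1 l2 l3 l4 : ℝ) (f1 f2 f3 f4 : ℝ → ℝ)
    (h1 : ∀ x : ℝ, x ≠ 0 → qDeriv q f1 x = l1 * f1 x)
    (h2 : ∀ x : ℝ, x ≠ 0 → qDeriv q f2 x = l2 * f2 x)
    (h3 : ∀ x : ℝ, x ≠ 0 → qDeriv q f3 x = l3 * f3 x)
    (h4 : ∀ x : ℝ, x ≠ 0 → qDeriv q f4 x = l4 * f4 x) :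
    ∀ x : ℝ, x ≠ 0 →
      qWronskian q 4
        ![fun y => f1 y + f4 y, fun y => f2 y + f3 y,
          (qDeriv q)^[l] (fun y => f1 y + f4 y),
          (qDeriv q)^[l] (fun y => f2 y + f3 y)] x =
      (l4 ^ l - l1 ^ l) * (l2 ^ l - l3 ^ l) *
        ((l2 - l1) * (l3 - l1) * (l4 - l1) * (l3 - l2) * (l4 - l2) * (l4 - l3)) *
        (f1 x * f2 x * f3 x * f4 x) := by
  intro x hx
  have key14 := qDeriv_iter_sum q hq0 hq1 l1 l4 f1 f4 h1 h4
  have key23 := qDeriv_iter_sum q hq0 hq1 l2 l3 f2 f3 h2 h3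
  have comp : ∀ (k : ℕ) (g : ℝ → ℝ),
      (qDeriv q)^[k] ((qDeriv q)^[l] g) x = (qDeriv q)^[k + l] g x := by
    intro k g
    rw [Function.iterate_add_apply]
  unfold qWronskian
  have hM : (Matrix.of fun i j : Fin 4 =>
      (qDeriv q)^[(i : ℕ)]
        (![fun y => f1 y + f4 y, fun y => f2 y + f3 y,
          (qDeriv q)^[l] (fun y => f1 y + f4 y),
          (qDeriv q)^[l] (fun y => f2 y + f3 y)] j) x) =
      Matrix.of fun i j : Fin 4 =>
        ![![f1 x + f4 x, f2 x + f3 x,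
            l1 ^ l * f1 x + l4 ^ l * f4 x, l2 ^ l * f2 x + l3 ^ l * f3 x],
          ![l1 * f1 x + l4 * f4 x, l2 * f2 x + l3 * f3 x,
            l1 * l1 ^ l * f1 x + l4 * l4 ^ l * f4 x, l2 * l2 ^ l * f2 x + l3 * l3 ^ l * f3 x],
          ![l1 ^ 2 * f1 x + l4 ^ 2 * f4 x, l2 ^ 2 * f2 x + l3 ^ 2 * f3 x,
            l1 ^ 2 * l1 ^ l * f1 x + l4 ^ 2 * l4 ^ l * f4 x,
            l2 ^ 2 * l2 ^ l * f2 x + l3 ^ 2 * l3 ^ l * f3 x],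
          ![l1 ^ 3 * f1 x + l4 ^ 3 * f4 x, l2 ^ 3 * f2 x + l3 ^ 3 * f3 x,
            l1 ^ 3 * l1 ^ l * f1 x + l4 ^ 3 * l4 ^ l * f4 x,
            l2 ^ 3 * l2 ^ l * f2 x + l3 ^ 3 * l3 ^ l * f3 x]] i j := by
    ext i j
    fin_cases i <;> fin_cases j <;>
      simp only [Matrix.of_apply, Fin.zero_eta, Fin.mk_one, Fin.reduceFinMk, Fin.isValue,
        Matrix.cons_val_zero, Matrix.cons_val_one, Matrix.head_cons,
        Matrix.cons_val_two, Matrix.tail_cons, Matrix.cons_val_three]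
    all_goals first
      | rw [comp, key14 _ x hx]
      | rw [comp, key23 _ x hx]
      | rw [key14 _ x hx]
      | rw [key23 _ x hx]
    all_goals simp only [Fin.isValue, Fin.val_zero, Fin.val_one, Fin.val_two,
      show ((3 : Fin 4) : ℕ) = 3 from rfl, pow_add, pow_zero, pow_one]
    all_goals ring
  rw [hM]
  simp only [Matrix.det_succ_row_zero, Fin.sum_univ_succ, Matrix.submatrix_apply,
    Matrix.det_fin_zero, Fin.succAbove, Matrix.of_apply, Matrix.cons_val', Matrix.cons_val_zero,
    Matrix.cons_val_one, Matrix.head_cons, Matrix.empty_val', Matrix.cons_val_fin_one,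
    Fin.isValue, Fin.val_zero, Fin.val_succ, Fin.castSucc, Fin.castAdd, Fin.castLE,
    Finset.univ_unique, Finset.sum_const, Fin.lt_def, Matrix.cons_val_succ, pow_succ, pow_zero, Matrix.cons_val,
    Matrix.cons_val_two, Matrix.tail_cons]
  norm_num
  simp only [Matrix.cons_val, Matrix.cons_val_two, Matrix.tail_cons, Matrix.head_cons]
  set_option maxRecDepth 100000 in
  ring
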